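/- Let L be the nonlocal operator Lu(x) = (1/2)∫_{ℝⁿ∖{0}} (u(x+y)+u(x−y)−2u(x)) J(|y|) dy, where J:(0,∞)→(0,∞) is non-increasing with ∫_{ℝⁿ}(1∧|y|²)J(|y|)dy < ∞ and ∫_{B_r}|y|²J(|y|)dy > 0 for every r>0. Then for r ≥ 4 and w(x) = min(1, |x|²/r³), there exists δ(r) = r⁻³∫_{B_r}|y|²J(|y|)dy > 0 such that Lw(x) ≥ δ(r) for all x with |x| < r. -/

import Mathlib

open MeasureTheory

/-- The symmetric nonlocal operator with kernel J(|y|)dy. -/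
noncomputable def Lop {n : ℕ} (J : ℝ → ℝ) (v : EuclideanSpace ℝ (Fin n) → ℝ)
    (x : EuclideanSpace ℝ (Fin n)) : ℝ :=
  (1 / 2) * ∫ y : EuclideanSpace ℝ (Fin n), (v (x + y) + v (x - y) - 2 * v x) * J ‖y‖

/-- For J non-increasing and positive with ∫(1∧|y|²)J(|y|)dy < ∞ and
∫_{B_r}|y|²J(|y|)dy > 0, for r ≥ 4 and w(x) = min(1,|x|²/r³), the quantity
δ(r) = r⁻³∫_{B_r}|y|²J(|y|)dy is positive and Lw(x) ≥ δ(r) for all |x| < r. -/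
theorem stmt9 {n : ℕ} (J : ℝ → ℝ)
    (hJpos : ∀ s : ℝ, 0 < s → 0 < J s)
    (hJanti : AntitoneOn J (Set.Ioi (0:ℝ)))
    (hJint : Integrable (fun y : EuclideanSpace ℝ (Fin n) => min 1 (‖y‖ ^ 2) * J ‖y‖))
    (r : ℝ) (hr : 4 ≤ r)
    (hJr : 0 < ∫ y in Metric.ball (0 : EuclideanSpace ℝ (Fin n)) r, ‖y‖ ^ 2 * J ‖y‖) :
    0 < (∫ y in Metric.ball (0 : EuclideanSpace ℝ (Fin n)) r, ‖y‖ ^ 2 * J ‖y‖) / r ^ 3 ∧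
    ∀ x : EuclideanSpace ℝ (Fin n), ‖x‖ < r →
      (∫ y in Metric.ball (0 : EuclideanSpace ℝ (Fin n)) r, ‖y‖ ^ 2 * J ‖y‖) / r ^ 3 ≤
        Lop J (fun z => min 1 (‖z‖ ^ 2 / r ^ 3)) x := by
  have hr0 : (0:ℝ) < r := by linarith
  have hr3 : (0:ℝ) < r ^ 3 := by positivity
  have hr4 : 4 * r ^ 2 ≤ r ^ 3 := by
    nlinarith [mul_nonneg (sq_nonneg r) (by linarith : (0:ℝ) ≤ r - 4)]
  have hr31 : (1:ℝ) ≤ r ^ 3 := by nlinarith [sq_nonneg r]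
  refine ⟨div_pos hJr hr3, ?_⟩
  intro x hx
  set W : EuclideanSpace ℝ (Fin n) → ℝ := fun z => min 1 (‖z‖ ^ 2 / r ^ 3) with hWdef
  set d : EuclideanSpace ℝ (Fin n) → ℝ :=
    fun y => W (x + y) + W (x - y) - 2 * W x with hddef
  have hWnn : ∀ z, 0 ≤ W z := fun z => le_min (by norm_num) (by positivity)
  have hWle1 : ∀ z, W z ≤ 1 := fun z => min_le_left _ _
  have hWleq : ∀ z, W z ≤ ‖z‖ ^ 2 / r ^ 3 := fun z => min_le_right _ _
  have hx2 : ‖x‖ ^ 2 ≤ r ^ 2 := by nlinarith [norm_nonneg x]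
  have hxq : ‖x‖ ^ 2 / r ^ 3 ≤ 1 / 4 := by
    rw [div_le_div_iff₀ hr3 (by norm_num)]
    nlinarith
  have hWx : W x = ‖x‖ ^ 2 / r ^ 3 := by
    apply min_eq_right; linarith
  have hpar : ∀ y : EuclideanSpace ℝ (Fin n),
      ‖x + y‖ ^ 2 + ‖x - y‖ ^ 2 = 2 * (‖x‖ ^ 2 + ‖y‖ ^ 2) := by
    intro y
    have := parallelogram_law_with_norm ℝ x y
    nlinarith [this]
  -- the second difference when nothing is capped
  have hcalc : ∀ y : EuclideanSpace ℝ (Fin n),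
      W (x + y) = ‖x + y‖ ^ 2 / r ^ 3 → W (x - y) = ‖x - y‖ ^ 2 / r ^ 3 →
      d y = 2 * ‖y‖ ^ 2 / r ^ 3 := by
    intro y e1 e2
    have hp := hpar y
    simp only [hddef]
    rw [e1, e2, hWx, ← add_div, hp]
    ring
  -- nonnegativity of the second difference
  have hd0 : ∀ y, 0 ≤ d y := by
    intro y
    rcases le_or_gt 1 (‖x + y‖ ^ 2 / r ^ 3) with h1 | h1
    · have e : W (x + y) = 1 := min_eq_left h1
      have h2 := hWnn (x - y)
      simp only [hddef]; rw [e, hWx]; linarith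
    rcases le_or_gt 1 (‖x - y‖ ^ 2 / r ^ 3) with h2 | h2
    · have e : W (x - y) = 1 := min_eq_left h2
      have h3 := hWnn (x + y)
      simp only [hddef]; rw [e, hWx]; linarith
    · rw [hcalc y (min_eq_right h1.le) (min_eq_right h2.le)]
      positivity
  -- upper bound of the second difference
  have hdle : ∀ y, d y ≤ 2 * min 1 (‖y‖ ^ 2) := by
    intro y
    have hb1 : d y ≤ 2 := by
      have := hWle1 (x + y); have := hWle1 (x - y); have := hWnn x
      simp only [hddef]; linarith
    have key : ‖x + y‖ ^ 2 / r ^ 3 + ‖x - y‖ ^ 2 / r ^ 3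
        = 2 * (‖x‖ ^ 2 / r ^ 3) + 2 * ‖y‖ ^ 2 / r ^ 3 := by
      rw [← add_div, hpar y]; ring
    have hb2 : d y ≤ 2 * ‖y‖ ^ 2 / r ^ 3 := by
      have h1 := hWleq (x + y); have h2 := hWleq (x - y)
      simp only [hddef]; rw [hWx]
      linarith
    rcases le_total 1 (‖y‖ ^ 2) with h | h
    · rw [min_eq_left h]; linarith
    · rw [min_eq_right h]
      have h2 : 2 * ‖y‖ ^ 2 / r ^ 3 ≤ 2 * ‖y‖ ^ 2 := by
        rw [div_le_iff₀ hr3]; nlinarith [norm_nonneg y]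
      exact hb2.trans h2
  -- exact value on the ball
  have hdball : ∀ y : EuclideanSpace ℝ (Fin n), ‖y‖ < r → d y = 2 * ‖y‖ ^ 2 / r ^ 3 := by
    intro y hy
    have h1 : ‖x + y‖ ^ 2 / r ^ 3 ≤ 1 := by
      rw [div_le_one hr3]
      have h := norm_add_le x y
      nlinarith [norm_nonneg (x + y), norm_nonneg x, norm_nonneg y]
    have h2 : ‖x - y‖ ^ 2 / r ^ 3 ≤ 1 := by
      rw [div_le_one hr3]
      have h := norm_sub_le x y
      nlinarith [norm_nonneg (x - y), norm_nonneg x, norm_nonneg y]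
    exact hcalc y (min_eq_right h1) (min_eq_right h2)
  have hdzero : d 0 = 0 := by simp only [hddef, add_zero, sub_zero]; ring
  set g : EuclideanSpace ℝ (Fin n) → ℝ := fun y => d y * J ‖y‖ with hgdef
  -- measurability
  have hWc : Continuous W := continuous_const.min ((continuous_norm.pow 2).div_const _)
  have hdc : Continuous d := by
    apply Continuous.sub
    apply Continuous.add
    · exact hWc.comp (continuous_const.add continuous_id)
    · exact hWc.comp (continuous_const.sub continuous_id)
    · exact continuous_const
  have hgeq : g = fun y => (d y / min 1 (‖y‖ ^ 2)) * (min 1 (‖y‖ ^ 2) * J ‖y‖) := by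
    funext y
    by_cases hy : y = 0
    · subst hy; simp [hgdef, hdzero]
    · have hm : min 1 (‖y‖ ^ 2) ≠ 0 :=
        (lt_min (by norm_num) (pow_pos (norm_pos_iff.mpr hy) 2)).ne'
      simp only [hgdef]; field_simp
  have hgm : AEStronglyMeasurable g volume := by
    rw [hgeq]
    exact ((hdc.measurable.div
      (continuous_const.min (continuous_norm.pow 2)).measurable).aestronglyMeasurable).mul
      hJint.aestronglyMeasurable
  have hgnn : ∀ y, 0 ≤ g y := by
    intro y
    by_cases hy : y = 0
    · subst hy; simp [hgdef, hdzero]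
    · exact mul_nonneg (hd0 y) (hJpos _ (norm_pos_iff.mpr hy)).le
  have hgbd : ∀ y, ‖g y‖ ≤ 2 * (min 1 (‖y‖ ^ 2) * J ‖y‖) := by
    intro y
    by_cases hy : y = 0
    · subst hy; simp [hgdef, hdzero]
    · have hJ : 0 ≤ J ‖y‖ := (hJpos _ (norm_pos_iff.mpr hy)).le
      rw [Real.norm_eq_abs, abs_of_nonneg (mul_nonneg (hd0 y) hJ)]
      calc d y * J ‖y‖ ≤ 2 * min 1 (‖y‖ ^ 2) * J ‖y‖ :=
            mul_le_mul_of_nonneg_right (hdle y) hJ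
        _ = 2 * (min 1 (‖y‖ ^ 2) * J ‖y‖) := by ring
  have hgint : Integrable g :=
    Integrable.mono' (hJint.const_mul 2) hgm (Filter.Eventually.of_forall hgbd)
  have hsub : ∫ y in Metric.ball (0 : EuclideanSpace ℝ (Fin n)) r, g y ≤ ∫ y, g y :=
    setIntegral_le_integral hgint (Filter.Eventually.of_forall hgnn)
  have hball : ∫ y in Metric.ball (0 : EuclideanSpace ℝ (Fin n)) r, g y
      = (2 / r ^ 3) * ∫ y in Metric.ball (0 : EuclideanSpace ℝ (Fin n)) r, ‖y‖ ^ 2 * J ‖y‖ := by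
    rw [← integral_const_mul]
    apply setIntegral_congr_fun measurableSet_ball
    intro y hy
    rw [Metric.mem_ball, dist_zero_right] at hy
    simp only [hgdef]
    rw [hdball y hy]
    ring
  have hLop : Lop J W x = (1 / 2) * ∫ y, g y := rfl
  show (∫ y in Metric.ball (0 : EuclideanSpace ℝ (Fin n)) r, ‖y‖ ^ 2 * J ‖y‖) / r ^ 3 ≤ Lop J W x
  rw [hLop]
  have heq : (∫ y in Metric.ball (0 : EuclideanSpace ℝ (Fin n)) r, ‖y‖ ^ 2 * J ‖y‖) / r ^ 3
      = (1 / 2) * ∫ y in Metric.ball (0 : EuclideanSpace ℝ (Fin n)) r, g y := by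
    rw [hball]; ring
  rw [heq]
  linarith
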